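/- The formal power series u(t,x) = Σ_{n≥0} ((2n)!/n!) · t^n/(1−x)^{2n+1}, viewed for fixed x with |x| < 1 as a power series in t, has radius of convergence 0 for every t ≠ 0; i.e., for any fixed x with |x|<1 and any t ≠ 0 the series Σ_{n≥0} ((2n)!/n!)·t^n/(1−x)^{2n+1} diverges. -/

import Mathlib

/-- The formal power series solution `Σ ((2n)!/n!) tⁿ/(1−x)^{2n+1}` of the heat
equation with Cauchy data `1/(1−x)` diverges for every `t ≠ 0` and `|x| < 1`. -/
theorem stmt_7 (x t : ℝ) (hx : |x| < 1) (ht : t ≠ 0) :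
    ¬ ∃ L : ℝ, Filter.Tendsto
        (fun N => ∑ n ∈ Finset.range N,
          ((Nat.factorial (2 * n) : ℝ) / (Nat.factorial n : ℝ)) * t ^ n
            / (1 - x) ^ (2 * n + 1))
        Filter.atTop (nhds L) := by
  rintro ⟨L, hL⟩
  have hx1 : (0:ℝ) < 1 - x := by
    have := abs_lt.mp hx
    linarith [this.2]
  set a : ℕ → ℝ := fun n =>
    ((Nat.factorial (2 * n) : ℝ) / (Nat.factorial n : ℝ)) * t ^ n
      / (1 - x) ^ (2 * n + 1) with ha
  have h0 : Filter.Tendsto a Filter.atTop (nhds 0) := by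
    have h1 := (hL.comp (Filter.tendsto_add_atTop_nat 1)).sub hL
    simp only [Function.comp, Finset.sum_range_succ_sub_sum, sub_self] at h1
    simpa using h1
  have habs : Filter.Tendsto (fun n => |a n|) Filter.atTop (nhds 0) := by
    simpa using h0.abs
  set s : ℝ := |t| / (1 - x) ^ 2 with hs
  have hspos : 0 < s := div_pos (abs_pos.mpr ht) (by positivity)
  have hg : Filter.Tendsto (fun n => (Nat.factorial n : ℝ) * s ^ n / (1 - x))
      Filter.atTop Filter.atTop := by
    have h2 : Filter.Tendsto (fun n => (1/s) ^ n / (Nat.factorial n : ℝ))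
        Filter.atTop (nhds 0) := FloorSemiring.tendsto_pow_div_factorial_atTop (1/s)
    have h3 : Filter.Tendsto (fun n => (1/s) ^ n / (Nat.factorial n : ℝ))
        Filter.atTop (nhdsWithin 0 (Set.Ioi 0)) := by
      apply tendsto_nhdsWithin_of_tendsto_nhds_of_eventually_within _ h2
      filter_upwards with n
      have := Nat.factorial_pos n
      simp only [Set.mem_Ioi]
      positivity
    have h4 := h3.inv_tendsto_nhdsGT_zero
    have h5 : (fun n => ((1/s) ^ n / (Nat.factorial n : ℝ))⁻¹)
        = fun n => (Nat.factorial n : ℝ) * s ^ n := by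
      funext n
      have hf : (Nat.factorial n : ℝ) ≠ 0 := Nat.cast_ne_zero.mpr (Nat.factorial_ne_zero n)
      have hsn : s ^ n ≠ 0 := pow_ne_zero _ hspos.ne'
      field_simp
      rw [← mul_pow, one_div_mul_cancel hspos.ne', one_pow]
    rw [Pi.inv_def] at h4
    rw [h5] at h4
    exact h4.atTop_div_const hx1
  have hle : ∀ n, (Nat.factorial n : ℝ) * s ^ n / (1 - x) ≤ |a n| := by
    intro n
    have hf : (0:ℝ) < (Nat.factorial n : ℝ) := Nat.cast_pos.mpr (Nat.factorial_pos n)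
    have hfact : ((Nat.factorial n : ℝ)) * (Nat.factorial n : ℝ) ≤ (Nat.factorial (2*n) : ℝ) := by
      have hd : Nat.factorial n * Nat.factorial n ∣ Nat.factorial (2 * n) := by
        have := Nat.factorial_mul_factorial_dvd_factorial_add n n
        simpa [two_mul] using this
      exact_mod_cast Nat.le_of_dvd (Nat.factorial_pos _) hd
    have habsa : |a n| = ((Nat.factorial (2*n) : ℝ) / (Nat.factorial n : ℝ)) * |t| ^ n
        / (1 - x) ^ (2 * n + 1) := by
      rw [ha]
      rw [abs_div, abs_mul, abs_div, abs_pow, abs_pow,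
        abs_of_pos hx1, Nat.abs_cast, Nat.abs_cast]
    rw [habsa]
    have hseq : s ^ n = |t| ^ n / (1 - x) ^ (2 * n) := by
      rw [hs, div_pow, ← pow_mul]
    rw [hseq]
    have hlhs : (Nat.factorial n : ℝ) * (|t| ^ n / (1 - x) ^ (2 * n)) / (1 - x)
        = (Nat.factorial n : ℝ) * |t| ^ n / (1 - x) ^ (2 * n + 1) := by
      rw [pow_succ]
      field_simp
    rw [hlhs]
    gcongr
    rw [le_div_iff₀ hf]
    exact hfact
  have htop : Filter.Tendsto (fun n => |a n|) Filter.atTop Filter.atTop :=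
    Filter.tendsto_atTop_mono hle hg
  exact not_tendsto_atTop_of_tendsto_nhds habs htop
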